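/- For every strictly increasing sequence α with α_n > 1 and α_n → ∞, the Cesàro operator C : Λ₀(α) → Λ₀(α) is not a compact operator; that is, there is no neighborhood U of 0 in Λ₀(α) such that C(U) is relatively compact in Λ₀(α). Equivalently, for every k ≥ 1 the image under C of the set {x ∈ Λ₀(α) : p_k(x) ≤ 1} is not relatively compact in Λ₀(α). -/

import Mathlib

open Filter Finset Topology

noncomputable section

/-- The weight `w_k(n) = e^{-alpha_n / k}`.  Indices are shifted by one: the natural
numbers `k n : Nat` represent the indices `k+1` and `n+1` (both running from `1`). -/
def wt (a : ℕ → ℝ) (k n : ℕ) : ℝ := Real.exp (-(a n) / ((k : ℝ) + 1))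

/-- Membership in the power series space of finite type `Λ₀(α)`:
`x ∈ Λ₀(α)` iff `w_k(n)|x_n| → 0` for every `k ≥ 1`. -/
def memLambda (a : ℕ → ℝ) (x : ℕ → ℂ) : Prop :=
  ∀ k : ℕ, Tendsto (fun n => wt a k n * ‖x n‖) atTop (𝓝 0)

/-- The norm `p_k(x) = sup_n w_k(n)|x_n|` generating the Fréchet topology of `Λ₀(α)`. -/
def pk (a : ℕ → ℝ) (k : ℕ) (x : ℕ → ℂ) : ℝ := ⨆ n : ℕ, wt a k n * ‖x n‖

/-- The discrete Cesàro operator `(C x)_n = (x_1 + ⋯ + x_n)/n` (0-indexed). -/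
def cesaro (x : ℕ → ℂ) : ℕ → ℂ := fun n => (∑ i ∈ Finset.range (n + 1), x i) / ((n : ℂ) + 1)

/-- A subset `S` of `Λ₀(α)` is relatively compact.  Since `Λ₀(α)` is a Fréchet
(hence complete metrizable) space, this is equivalent to total boundedness with
respect to the generating norms `p_k`. -/
def RelCompact (a : ℕ → ℝ) (S : Set (ℕ → ℂ)) : Prop :=
  ∀ k : ℕ, ∀ ε : ℝ, 0 < ε → ∃ F : Finset (ℕ → ℂ), (∀ y ∈ F, memLambda a y) ∧
    ∀ x ∈ S, ∃ y ∈ F, pk a k (x - y) < ε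

namespace NotCompactAux

lemma exp_le_of_bound {u v : ℝ} (h : Real.exp u ≤ v) : u ≤ Real.log v := by
  have hv : 0 < v := lt_of_lt_of_le (Real.exp_pos u) h
  calc u = Real.log (Real.exp u) := (Real.log_exp u).symm
    _ ≤ Real.log v := Real.log_le_log (Real.exp_pos u) h

/-- The core analytic lemma: if `β` is monotone, nonnegative, and
`∑_{i ≤ m} e^{β i} ≤ B (n+1) e^{t β n}` for all `m ≤ n` with `0 < t < 1`, then `β` is bounded. -/
lemma core (t B : ℝ) (ht0 : 0 < t) (ht1 : t < 1) (hB : 1 ≤ B)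
    (β : ℕ → ℝ) (hβ0 : ∀ n, 0 ≤ β n) (hm : Monotone β)
    (H : ∀ m n : ℕ, m ≤ n →
      (∑ i ∈ Finset.range (m + 1), Real.exp (β i)) ≤ B * ((n : ℝ) + 1) * Real.exp (t * β n)) :
    ∀ m, β m ≤ Real.log (3 * B) / (1 - t) + 1 := by
  have h1t : 0 < 1 - t := by linarith
  have hB0 : (0:ℝ) < B := lt_of_lt_of_le one_pos hB
  have hlog3B : 0 ≤ Real.log (3 * B) := Real.log_nonneg (by linarith)
  -- bound from the last term of the sum
  have hlast : ∀ n : ℕ, β n ≤ (Real.log B + Real.log ((n : ℝ) + 1)) / (1 - t) := by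
    intro n
    have h1 : Real.exp (β n) ≤ ∑ i ∈ Finset.range (n + 1), Real.exp (β i) := by
      refine Finset.single_le_sum (f := fun i => Real.exp (β i))
        (fun i _ => (Real.exp_pos _).le) ?_
      simp
    have h2 := H n n le_rfl
    have h3 : Real.exp (β n - t * β n) ≤ B * ((n:ℝ)+1) := by
      rw [Real.exp_sub, div_le_iff₀ (Real.exp_pos _)]
      exact le_trans h1 h2
    have h4 : β n - t * β n ≤ Real.log (B * ((n:ℝ)+1)) := exp_le_of_bound h3
    have h5 : Real.log (B * ((n:ℝ)+1)) = Real.log B + Real.log ((n:ℝ)+1) :=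
      Real.log_mul (by positivity) (by positivity)
    rw [le_div_iff₀ h1t]
    nlinarith [h4, h5]
  -- doubling step
  have hstep : ∀ m : ℕ, β m ≤ t * β (2 * m) + Real.log (3 * B) := by
    intro m
    have hsub : Finset.Icc m (2*m) ⊆ Finset.range (2*m+1) := by
      intro i hi
      rw [Finset.mem_range]
      exact Nat.lt_succ_of_le (Finset.mem_Icc.1 hi).2
    have hcard : (Finset.Icc m (2*m)).card = m + 1 := by
      rw [Nat.card_Icc]; omega
    have hlow : ((m:ℝ)+1) * Real.exp (β m) ≤ ∑ i ∈ Finset.range (2*m+1), Real.exp (β i) := by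
      calc ((m:ℝ)+1) * Real.exp (β m) = ∑ _i ∈ Finset.Icc m (2*m), Real.exp (β m) := by
            rw [Finset.sum_const, hcard, nsmul_eq_mul]; push_cast; ring
        _ ≤ ∑ i ∈ Finset.Icc m (2*m), Real.exp (β i) :=
            Finset.sum_le_sum (fun i hi => Real.exp_le_exp.2 (hm (Finset.mem_Icc.1 hi).1))
        _ ≤ ∑ i ∈ Finset.range (2*m+1), Real.exp (β i) :=
            Finset.sum_le_sum_of_subset_of_nonneg hsub (fun i _ _ => (Real.exp_pos _).le)
    have h2 := H (2*m) (2*m) le_rfl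
    have h3 : ((m:ℝ)+1) * Real.exp (β m) ≤ B * (((2*m:ℕ):ℝ) + 1) * Real.exp (t * β (2*m)) :=
      le_trans hlow h2
    have h4 : ((2*m:ℕ):ℝ) + 1 ≤ 3 * ((m:ℝ)+1) := by
      push_cast
      have : (0:ℝ) ≤ (m:ℝ) := Nat.cast_nonneg m
      linarith
    have hm1 : (0:ℝ) < (m:ℝ)+1 := by positivity
    have h5 : Real.exp (β m) ≤ 3 * B * Real.exp (t * β (2*m)) := by
      rw [← mul_le_mul_iff_right₀ hm1]
      calc ((m:ℝ)+1) * Real.exp (β m)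
          ≤ B * (3 * ((m:ℝ)+1)) * Real.exp (t * β (2*m)) := by
            refine le_trans h3 ?_
            apply mul_le_mul_of_nonneg_right _ (Real.exp_pos _).le
            exact mul_le_mul_of_nonneg_left h4 hB0.le
        _ = ((m:ℝ)+1) * (3 * B * Real.exp (t * β (2*m))) := by ring
    have h6 : Real.exp (β m - t * β (2*m)) ≤ 3 * B := by
      rw [Real.exp_sub, div_le_iff₀ (Real.exp_pos _)]
      linarith
    have := exp_le_of_bound h6
    linarith
  -- iterate the doubling step
  have hiter : ∀ j m : ℕ, β m ≤ t ^ j * β (2 ^ j * m) + Real.log (3*B) / (1 - t) := by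
    intro j
    induction j with
    | zero =>
      intro m
      have hz : (2:ℕ)^0 * m = m := by norm_num
      rw [hz, pow_zero, one_mul]
      linarith [div_nonneg hlog3B h1t.le]
    | succ j ih =>
      intro m
      have h1 := hstep m
      have h2 := ih (2*m)
      have hpow : 2 ^ j * (2 * m) = 2 ^ (j+1) * m := by ring
      have key : t * (Real.log (3*B)/(1-t)) + Real.log (3*B) = Real.log (3*B)/(1-t) := by
        field_simp
        ring
      calc β m ≤ t * β (2*m) + Real.log (3*B) := h1
        _ ≤ t * (t^j * β (2^(j+1)*m) + Real.log (3*B)/(1-t)) + Real.log (3*B) := by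
            rw [← hpow]
            exact add_le_add_left (mul_le_mul_of_nonneg_left h2 ht0.le) _
        _ = t^(j+1) * β (2^(j+1)*m) + (t * (Real.log (3*B)/(1-t)) + Real.log (3*B)) := by ring
        _ = t^(j+1) * β (2^(j+1)*m) + Real.log (3*B)/(1-t) := by rw [key]
  -- conclude
  intro m
  have hlim : Tendsto (fun j : ℕ =>
      t ^ j * ((Real.log B + Real.log ((m:ℝ)+1) + j * Real.log 2) / (1 - t))) atTop (𝓝 0) := by
    have e1 : Tendsto (fun j : ℕ => t ^ j) atTop (𝓝 0) :=
      tendsto_pow_atTop_nhds_zero_of_lt_one ht0.le ht1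
    have e2 : Tendsto (fun j : ℕ => (j:ℝ) * t ^ j) atTop (𝓝 0) :=
      tendsto_self_mul_const_pow_of_lt_one ht0.le ht1
    have e3 := (e1.const_mul ((Real.log B + Real.log ((m:ℝ)+1))/(1-t))).add
      (e2.const_mul (Real.log 2/(1-t)))
    rw [mul_zero, mul_zero, add_zero] at e3
    exact e3.congr fun j => by ring
  obtain ⟨j, hj⟩ := (hlim.eventually_lt_const one_pos).exists
  have hβj : β (2 ^ j * m) ≤ (Real.log B + Real.log ((m:ℝ)+1) + j * Real.log 2) / (1 - t) := by
    refine le_trans (hlast _) ?_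
    have h2j : (1:ℝ) ≤ 2^j := one_le_pow₀ (by norm_num : (1:ℝ) ≤ 2)
    have hle : ((2^j*m : ℕ):ℝ) + 1 ≤ ((m:ℝ)+1) * 2^j := by
      push_cast
      nlinarith [Nat.cast_nonneg (α := ℝ) m]
    have hlog : Real.log (((2^j*m:ℕ):ℝ)+1) ≤ Real.log ((m:ℝ)+1) + (j:ℝ) * Real.log 2 := by
      calc Real.log (((2^j*m:ℕ):ℝ)+1) ≤ Real.log (((m:ℝ)+1) * 2^j) :=
            Real.log_le_log (by positivity) hle
        _ = Real.log ((m:ℝ)+1) + Real.log ((2:ℝ)^j) :=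
            Real.log_mul (by positivity) (by positivity)
        _ = Real.log ((m:ℝ)+1) + (j:ℝ) * Real.log 2 := by rw [Real.log_pow]
    exact (div_le_div_iff_of_pos_right h1t).2 (by linarith)
  have h10 := hiter j m
  have h11 : t^j * β (2^j*m) ≤
      t ^ j * ((Real.log B + Real.log ((m:ℝ)+1) + j * Real.log 2) / (1 - t)) :=
    mul_le_mul_of_nonneg_left hβj (pow_nonneg ht0.le j)
  linarith

lemma exists_bound_of_tendsto_zero (f : ℕ → ℝ) (h : Tendsto f atTop (𝓝 (0:ℝ))) :
    ∃ C : ℝ, 0 ≤ C ∧ ∀ n, f n ≤ C := by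
  obtain ⟨C, hC⟩ := h.bddAbove_range
  exact ⟨max C 0, le_max_right _ _, fun n => le_trans (hC (Set.mem_range_self n)) (le_max_left _ _)⟩

lemma finset_bound (a : ℕ → ℝ) (k : ℕ) (F : Finset (ℕ → ℂ)) (hF : ∀ y ∈ F, memLambda a y) :
    ∃ M : ℝ, 0 ≤ M ∧ ∀ y ∈ F, ∀ n, wt a k n * ‖y n‖ ≤ M := by
  classical
  revert hF
  induction F using Finset.induction_on with
  | empty => exact fun _ => ⟨0, le_rfl, by simp⟩
  | @insert y G hyG ih =>
    intro hF
    obtain ⟨M, hM0, hM⟩ := ih (fun z hz => hF z (Finset.mem_insert_of_mem hz))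
    obtain ⟨C, hC0, hC⟩ := exists_bound_of_tendsto_zero _ (hF y (Finset.mem_insert_self y G) k)
    refine ⟨max M C, le_trans hM0 (le_max_left _ _), ?_⟩
    intro z hz n
    rcases Finset.mem_insert.1 hz with rfl | hz
    · exact le_trans (hC n) (le_max_right _ _)
    · exact le_trans (hM z hz n) (le_max_left _ _)

end NotCompactAux

open NotCompactAux in
/-- the Cesàro operator on `Λ₀(α)` is not compact: for every `k` and
every `ε > 0`, the image under `C` of the set `{x ∈ Λ₀(α) : p_k(x) ≤ ε}` (these sets
form a basis of neighbourhoods of `0`) is not relatively compact in `Λ₀(α)`. -/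
theorem stmt2 (a : ℕ → ℝ) (hmono : StrictMono a) (h1 : ∀ n, 1 < a n)
    (htop : Tendsto a atTop atTop) :
    ∀ k : ℕ, ∀ ε : ℝ, 0 < ε →
      ¬ RelCompact a (cesaro '' {x : ℕ → ℂ | memLambda a x ∧ pk a k x ≤ ε}) := by
  intro k ε hε hRC
  classical
  obtain ⟨F, hFmem, hFnet⟩ := hRC (k + 1) 1 one_pos
  obtain ⟨M, hM0, hM⟩ := finset_bound a (k+1) F hFmem
  have hk1 : (0:ℝ) < (k:ℝ)+1 := by positivity
  have hk2 : (0:ℝ) < (k:ℝ)+2 := by positivity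
  set t : ℝ := ((k:ℝ)+1)/((k:ℝ)+2) with ht_def
  have ht0 : 0 < t := by positivity
  have ht1 : t < 1 := (div_lt_one hk2).2 (by linarith)
  set β : ℕ → ℝ := fun n => a n / ((k:ℝ)+1) with hβ_def
  have hβ0 : ∀ n, 0 ≤ β n := fun n => div_nonneg (by linarith [h1 n]) hk1.le
  have hβm : Monotone β := fun i j hij =>
    (div_le_div_iff_of_pos_right hk1).2 (hmono.monotone hij)
  set B : ℝ := max ((M+1)/ε) 1 with hB_def
  have hB1 : 1 ≤ B := le_max_right _ _
  have htβ : ∀ n, t * β n = a n/((k:ℝ)+2) := by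
    intro n
    rw [ht_def, hβ_def]
    field_simp
  have hwtn : ∀ n, wt a (k+1) n = Real.exp (-(a n)/((k:ℝ)+2)) := by
    intro n
    unfold wt
    push_cast
    ring_nf
  have H : ∀ m n : ℕ, m ≤ n →
      (∑ i ∈ Finset.range (m+1), Real.exp (β i)) ≤ B * ((n:ℝ)+1) * Real.exp (t * β n) := by
    intro m n hmn
    set S : ℝ := ∑ i ∈ Finset.range (m+1), Real.exp (β i) with hS_def
    have hSpos : 0 < S := Finset.sum_pos (fun i _ => Real.exp_pos _) ⟨0, by simp⟩
    set x : ℕ → ℂ := fun i => if i ≤ m then ((ε * Real.exp (β i) : ℝ) : ℂ) else 0 with hx_def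
    have habs_x : ∀ i, ‖x i‖ = if i ≤ m then ε * Real.exp (β i) else 0 := by
      intro i
      simp only [hx_def]
      by_cases hi : i ≤ m
      · rw [if_pos hi, if_pos hi, Complex.norm_real, Real.norm_of_nonneg (by positivity)]
      · rw [if_neg hi, if_neg hi, norm_zero]
    have hxmem : memLambda a x := by
      intro k''
      have hev : (fun n' => wt a k'' n' * ‖x n'‖) =ᶠ[atTop] (fun _ => (0:ℝ)) := by
        filter_upwards [eventually_ge_atTop (m+1)] with n' hn'
        have hnm : ¬ n' ≤ m := by omega
        rw [habs_x, if_neg hnm, mul_zero]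
      rw [tendsto_congr' hev]
      exact tendsto_const_nhds
    have hxpk : pk a k x ≤ ε := by
      apply ciSup_le
      intro i
      rw [habs_x]
      by_cases hi : i ≤ m
      · rw [if_pos hi]
        have e : Real.exp (-(a i)/((k:ℝ)+1)) * Real.exp (a i/((k:ℝ)+1)) = 1 := by
          rw [← Real.exp_add, neg_div, neg_add_cancel, Real.exp_zero]
        have : wt a k i * (ε * Real.exp (β i)) = ε := by
          calc wt a k i * (ε * Real.exp (β i))
              = ε * (Real.exp (-(a i)/((k:ℝ)+1)) * Real.exp (a i/((k:ℝ)+1))) := by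
                rw [hβ_def]; unfold wt; ring
            _ = ε := by rw [e, mul_one]
        exact le_of_eq this
      · rw [if_neg hi, mul_zero]
        exact hε.le
    obtain ⟨y, hyF, hylt⟩ := hFnet (cesaro x) ⟨x, ⟨hxmem, hxpk⟩, rfl⟩
    have hwt_pos : ∀ k'' n', (0:ℝ) < wt a k'' n' := fun _ _ => Real.exp_pos _
    have hwt1 : ∀ k'' n', wt a k'' n' ≤ 1 := by
      intro k'' n'
      unfold wt
      have hd : -(a n') / ((k'':ℝ)+1) ≤ 0 :=
        div_nonpos_of_nonpos_of_nonneg (by linarith [h1 n']) (by positivity)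
      calc Real.exp (-(a n') / ((k'':ℝ)+1)) ≤ Real.exp 0 := Real.exp_le_exp.2 hd
        _ = 1 := Real.exp_zero
    have hkey : ∀ N, ∑ i ∈ Finset.range N, ‖x i‖ ≤ ε * S := by
      intro N
      have h3 : ∑ i ∈ Finset.range N, ‖x i‖
          ≤ ∑ i ∈ Finset.range (max N (m+1)), ‖x i‖ :=
        Finset.sum_le_sum_of_subset_of_nonneg (Finset.range_subset_range.2 (le_max_left _ _))
          (fun i _ _ => norm_nonneg _)
      have h4 : ∑ i ∈ Finset.range (max N (m+1)), ‖x i‖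
          = ∑ i ∈ Finset.range (m+1), ‖x i‖ := by
        refine (Finset.sum_subset (Finset.range_subset_range.2 (le_max_right _ _)) ?_).symm
        intro i _ hi
        have hnm : ¬ i ≤ m := fun h => hi (Finset.mem_range.2 (Nat.lt_succ_of_le h))
        rw [habs_x, if_neg hnm]
      have h5 : ∑ i ∈ Finset.range (m+1), ‖x i‖ = ε * S := by
        rw [hS_def, Finset.mul_sum]
        refine Finset.sum_congr rfl fun i hi => ?_
        rw [habs_x, if_pos (Nat.lt_succ_iff.1 (Finset.mem_range.1 hi))]
      rw [h4, h5] at h3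
      exact h3
    have habs_n1 : ∀ n' : ℕ, ‖(n':ℂ)+1‖ = (n':ℝ)+1 := by
      intro n'
      rw [show ((n':ℂ)+1) = ((n'+1:ℕ):ℂ) by push_cast; ring, Complex.norm_natCast]
      push_cast; ring
    have hcb : ∀ n' : ℕ, ‖cesaro x n'‖ ≤ ε * S := by
      intro n'
      show ‖(∑ i ∈ Finset.range (n' + 1), x i) / ((n' : ℂ) + 1)‖ ≤ ε * S
      rw [norm_div, habs_n1]
      have h1' : ‖∑ i ∈ Finset.range (n'+1), x i‖ ≤ ε * S :=
        le_trans (norm_sum_le _ _) (hkey _)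
      have h2' : (1:ℝ) ≤ (n':ℝ)+1 := by
        have : (0:ℝ) ≤ (n':ℝ) := Nat.cast_nonneg _
        linarith
      calc ‖∑ i ∈ Finset.range (n'+1), x i‖ / ((n':ℝ)+1)
          ≤ (ε * S) / 1 := div_le_div₀ (by positivity) h1' one_pos h2'
        _ = ε * S := div_one _
    have hbdd : BddAbove (Set.range fun n' => wt a (k+1) n' * ‖(cesaro x - y) n'‖) := by
      refine ⟨ε * S + M, ?_⟩
      rintro r ⟨n', rfl⟩
      have htri : ‖cesaro x n' - y n'‖
          ≤ ‖cesaro x n'‖ + ‖y n'‖ := by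
        simpa using norm_sub_le_norm_sub_add_norm_sub (cesaro x n') 0 (y n')
      calc wt a (k+1) n' * ‖(cesaro x - y) n'‖
          = wt a (k+1) n' * ‖cesaro x n' - y n'‖ := by rw [Pi.sub_apply]
        _ ≤ wt a (k+1) n' * ‖cesaro x n'‖ + wt a (k+1) n' * ‖y n'‖ := by
            rw [← mul_add]
            exact mul_le_mul_of_nonneg_left htri (hwt_pos _ _).le
        _ ≤ 1 * (ε * S) + M :=
            add_le_add (mul_le_mul (hwt1 _ _) (hcb n') (norm_nonneg _) one_pos.le)
              (hM y hyF n')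
        _ = ε * S + M := by rw [one_mul]
    have hterm : wt a (k+1) n * ‖cesaro x n‖ ≤ M + 1 := by
      have h6 : wt a (k+1) n * ‖cesaro x n - y n‖ ≤ pk a (k+1) (cesaro x - y) := by
        have h := le_ciSup hbdd n
        simpa [pk, Pi.sub_apply] using h
      have h7 : ‖cesaro x n‖ ≤ ‖cesaro x n - y n‖ + ‖y n‖ := by
        simpa using norm_sub_le_norm_sub_add_norm_sub (cesaro x n) (y n) 0
      calc wt a (k+1) n * ‖cesaro x n‖
          ≤ wt a (k+1) n * ‖cesaro x n - y n‖ + wt a (k+1) n * ‖y n‖ := by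
            rw [← mul_add]
            exact mul_le_mul_of_nonneg_left h7 (hwt_pos _ _).le
        _ ≤ pk a (k+1) (cesaro x - y) + M := add_le_add h6 (hM y hyF n)
        _ ≤ M + 1 := by linarith
    -- compute the value of `cesaro x` at `n`
    have hsum : ∑ i ∈ Finset.range (n+1), x i = ((ε * S : ℝ) : ℂ) := by
      have h1' : ∑ i ∈ Finset.range (n+1), x i = ∑ i ∈ Finset.range (m+1), x i := by
        refine (Finset.sum_subset (Finset.range_subset_range.2 (by omega)) ?_).symm
        intro i _ hi
        have hnm : ¬ i ≤ m := fun h => hi (Finset.mem_range.2 (Nat.lt_succ_of_le h))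
        simp only [hx_def]
        exact if_neg hnm
      have h2' : ∑ i ∈ Finset.range (m+1), x i
          = ∑ i ∈ Finset.range (m+1), ((ε * Real.exp (β i) : ℝ):ℂ) := by
        refine Finset.sum_congr rfl fun i hi => ?_
        simp only [hx_def]
        exact if_pos (Nat.lt_succ_iff.1 (Finset.mem_range.1 hi))
      rw [h1', h2']
      norm_cast
      rw [hS_def, Finset.mul_sum]
    have habsc : ‖cesaro x n‖ = ε * S / ((n:ℝ)+1) := by
      show ‖(∑ i ∈ Finset.range (n + 1), x i) / ((n : ℂ) + 1)‖ = ε * S / ((n:ℝ)+1)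
      rw [hsum, norm_div, Complex.norm_real, Real.norm_of_nonneg (by positivity), habs_n1]
    rw [habsc, hwtn] at hterm
    -- rearrange
    have hn1 : (0:ℝ) < (n:ℝ)+1 := by positivity
    have hEpos : (0:ℝ) < Real.exp (a n/((k:ℝ)+2)) := Real.exp_pos _
    have hinv : Real.exp (-(a n)/((k:ℝ)+2)) = (Real.exp (a n/((k:ℝ)+2)))⁻¹ := by
      rw [← Real.exp_neg]
      congr 1
      ring
    rw [hinv] at hterm
    have h8 : ε * S ≤ (M+1) * (((n:ℝ)+1) * Real.exp (a n/((k:ℝ)+2))) := by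
      calc ε * S
          = (((n:ℝ)+1) * Real.exp (a n/((k:ℝ)+2))) *
            ((Real.exp (a n/((k:ℝ)+2)))⁻¹ * (ε * S/((n:ℝ)+1))) := by
            field_simp
        _ ≤ (((n:ℝ)+1) * Real.exp (a n/((k:ℝ)+2))) * (M+1) :=
            mul_le_mul_of_nonneg_left hterm (mul_pos hn1 hEpos).le
        _ = (M+1) * (((n:ℝ)+1) * Real.exp (a n/((k:ℝ)+2))) := by ring
    have h9 : S ≤ ((M+1)/ε) * (((n:ℝ)+1) * Real.exp (a n/((k:ℝ)+2))) := by
      rw [div_mul_eq_mul_div, le_div_iff₀ hε]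
      nlinarith
    calc S ≤ ((M+1)/ε) * (((n:ℝ)+1) * Real.exp (a n/((k:ℝ)+2))) := h9
      _ ≤ B * (((n:ℝ)+1) * Real.exp (a n/((k:ℝ)+2))) :=
          mul_le_mul_of_nonneg_right (le_max_left _ _) (by positivity)
      _ = B * ((n:ℝ)+1) * Real.exp (t * β n) := by rw [htβ n]; ring
  have hcore := core t B ht0 ht1 hB1 β hβ0 hβm H
  have hβtop : Tendsto β atTop atTop := Tendsto.atTop_div_const hk1 htop
  obtain ⟨m, hm⟩ := (hβtop.eventually_gt_atTop (Real.log (3*B)/(1-t) + 1)).exists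
  exact absurd (hcore m) (not_le.2 hm)
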